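/- Every projection in the unitization of C₀(𝔸) is trivial: if f : 𝔸 → ℝ is continuous, takes values in {0, 1}, and converges along the cocompact filter of 𝔸 (i.e., there is λ ∈ ℝ such that for every ε > 0 there is a compact K ⊆ 𝔸 with |f(x) − λ| < ε for all x ∉ K), then f is constant (identically 0 or identically 1). -/

import Mathlib

open Filter IsDedekindDomain

noncomputable section

/-- The finite adele ring `𝔸_f` of `ℚ`: the restricted product of the fields `ℚ_p` with
respect to the subrings `ℤ_p`, with the restricted product topology. -/
abbrev FiniteAdeles : Type := FiniteAdeleRing ℤ ℚ

/-- The adele ring `𝔸 = ℝ × 𝔸_f` of `ℚ`. -/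
abbrev AdeleRingQ : Type := ℝ × FiniteAdeles

/-- The diagonal embedding `ι : ℚ → 𝔸`, `q ↦ (q, (q)_p)`. -/
def diag (q : ℚ) : AdeleRingQ := ((q : ℝ), algebraMap ℚ FiniteAdeles q)

/-- A function on the adele ring is `ℚ`-periodic if it is invariant under translation by
every diagonally embedded rational. -/
def QPeriodic {β : Type*} (g : AdeleRingQ → β) : Prop :=
  ∀ (x : AdeleRingQ) (α : ℚ), g (x + diag α) = g x

/-- A continuous function `f : ℝ → ℂ` taking values in the unit circle `S¹` is *pre-periodic*
if for every `ε > 0` there is a positive integer `N` such that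
`|f (x + k * N) - f x| < ε` for all integers `k` and all real `x`. -/
def PrePeriodic (f : ℝ → ℂ) : Prop :=
  Continuous f ∧ (∀ x : ℝ, ‖f x‖ = 1) ∧
    ∀ ε : ℝ, 0 < ε → ∃ N : ℕ, 0 < N ∧
      ∀ (k : ℤ) (x : ℝ), ‖f (x + (k : ℝ) * (N : ℝ)) - f x‖ < ε

/-- `F : ℝ → ℝ` is a lift of `f : ℝ → S¹ ⊆ ℂ` if `F` is continuous and
`f x = e^{2 π i F x}` for all `x`. -/
def IsLift (f : ℝ → ℂ) (F : ℝ → ℝ) : Prop :=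
  Continuous F ∧ ∀ x : ℝ, f x = Complex.exp (2 * Real.pi * Complex.I * (F x : ℂ))


instance : Nonempty FiniteAdeles := ⟨0⟩

instance : NoncompactSpace AdeleRingQ := Prod.noncompactSpace_left

lemma key_step (f : AdeleRingQ → ℝ)
    (hc : Continuous f) (hv : ∀ x : AdeleRingQ, f x = 0 ∨ f x = 1)
    (hconv : Tendsto f (cocompact AdeleRingQ) (nhds 0)) :
    ∀ x : AdeleRingQ, f x ≠ 1 := by
  rintro ⟨r, a⟩ hx₀
  have hev : ∀ᶠ x in cocompact AdeleRingQ, f x ∈ Metric.ball (0:ℝ) (1/2) :=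
    hconv (Metric.ball_mem_nhds 0 (by norm_num))
  obtain ⟨K, hK, hKs⟩ := (hasBasis_cocompact.eventually_iff).mp hev
  set g : ℝ → ℝ := fun x => f (x, a) with hg
  have hgc : Continuous g := hc.comp (continuous_id.prodMk continuous_const)
  set T : Set ℝ := g ⁻¹' {1} with hT
  have hTo : IsOpen T := by
    have : T = g ⁻¹' Set.Ioi (1/2 : ℝ) := by
      ext x
      rcases hv (x, a) with h | h <;> simp [hT, hg, h] <;> norm_num
    rw [this]
    exact isOpen_Ioi.preimage hgc
  have hTc : IsClosed T := isClosed_singleton.preimage hgc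
  have hTuniv : T = Set.univ := IsClopen.eq_univ ⟨hTc, hTo⟩ ⟨r, hx₀⟩
  have hmem : ∀ x : ℝ, (x, a) ∈ K := by
    intro x
    by_contra hxK
    have h2 := hKs hxK
    have hxT : x ∈ T := by rw [hTuniv]; trivial
    have h1 : f (x, a) = 1 := hxT
    rw [h1] at h2
    simp [Real.dist_eq] at h2
    linarith [h2]
  have hsub : (Set.univ : Set ℝ) ⊆ Prod.fst '' K :=
    fun x _ => ⟨(x, a), hmem x, rfl⟩
  have := (hK.image continuous_fst).of_isClosed_subset isClosed_univ hsub
  exact noncompact_univ ℝ this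

/-- Every projection in the unitization of `C₀(𝔸)` is trivial: a continuous function
`f : 𝔸 → ℝ` with values in `{0, 1}` that converges along the cocompact filter of `𝔸`
is constant. -/
theorem unitization_projections_trivial (f : AdeleRingQ → ℝ) (lam : ℝ)
    (hc : Continuous f) (hv : ∀ x : AdeleRingQ, f x = 0 ∨ f x = 1)
    (hconv : Tendsto f (cocompact AdeleRingQ) (nhds lam)) :
    (∀ x : AdeleRingQ, f x = 0) ∨ (∀ x : AdeleRingQ, f x = 1) := by
  have hlam : lam ∈ ({0, 1} : Set ℝ) := by
    have hcl : IsClosed ({0, 1} : Set ℝ) := (Set.toFinite _).isClosed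
    exact hcl.mem_of_tendsto hconv (Filter.Eventually.of_forall fun x => hv x)
  rcases hlam with h0 | h1
  · subst h0
    left
    intro x
    rcases hv x with h | h
    · exact h
    · exact absurd h (key_step f hc hv hconv x)
  · right
    intro x
    have h1' : lam = 1 := h1
    subst h1'
    set g : AdeleRingQ → ℝ := fun x => 1 - f x with hg
    have hgc : Continuous g := continuous_const.sub hc
    have hgv : ∀ x, g x = 0 ∨ g x = 1 := by
      intro x; rcases hv x with h | h
      · right; simp [hg, h]
      · left; simp [hg, h]
    have hgconv : Tendsto g (cocompact AdeleRingQ) (nhds 0) := by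
      have := (tendsto_const_nhds (x := (1:ℝ)) (f := cocompact AdeleRingQ)).sub hconv
      simpa using this
    have hne := key_step g hgc hgv hgconv x
    rcases hv x with h | h
    · exfalso; apply hne; simp [hg, h]
    · exact h
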